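/- Let L be a field equipped with a non-archimedean additive valuation v : L → ℝ ∪ {∞} such that v(n·1_L) = 0 for every nonzero integer n, and let M = {x ∈ L : v(x) > 0} be the maximal ideal of the valuation ring. Then for every t ≥ 1, every nonzero polynomial in L[x] with at most t+1 nonzero terms has at most t roots in 1+M counted with multiplicities, i.e. Σ_{r ∈ 1+M} mult(f; r) ≤ t. In particular D₁(t,L) ≤ D_m(t,L) ≤ t. -/

import Mathlib

open scoped Classical

namespace RootsAux

open Polynomial

/-! ### Arithmetic helpers in `WithTop ℝ` -/

lemma aux_lt_add {a b c : WithTop ℝ} (ha : a ≠ ⊤) (hb : 0 < b) (hc : a ≤ c) :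
    a < b + c := by
  induction a using WithTop.recTopCoe with
  | top => exact absurd rfl ha
  | coe x =>
    induction b using WithTop.recTopCoe with
    | top => simp [top_add]
    | coe b' =>
      induction c using WithTop.recTopCoe with
      | top => simp [add_top]
      | coe c' =>
        rw [← WithTop.coe_add, WithTop.coe_lt_coe]
        have hb' : (0 : ℝ) < b' := by exact_mod_cast hb
        have hc' : x ≤ c' := by exact_mod_cast hc
        linarith

lemma pos_add_nonneg {a b : WithTop ℝ} (ha : 0 < a) (hb : 0 ≤ b) : 0 < a + b :=
  ha.trans_le (le_add_of_nonneg_right hb)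

variable {L : Type*} [Field L] (v : L → WithTop ℝ)

section VBasic

variable (hv0 : ∀ x, v x = ⊤ ↔ x = 0)
  (hvmul : ∀ x y, v (x * y) = v x + v y)
  (hvadd : ∀ x y, min (v x) (v y) ≤ v (x + y))
  (hvint : ∀ n : ℤ, n ≠ 0 → v ((n : ℤ) : L) = 0)

include hv0 in
lemma v_zero : v 0 = ⊤ := (hv0 0).2 rfl

include hvint in
lemma v_one : v 1 = 0 := by have := hvint 1 one_ne_zero; simpa using this

include hvmul hvint in
lemma v_neg (x : L) : v (-x) = v x := by
  have h := hvmul (-1) x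
  rw [neg_one_mul] at h
  have h1 : v (-1 : L) = 0 := by
    have := hvint (-1) (by norm_num); simpa using this
  rw [h, h1, zero_add]

include hv0 hvadd in
lemma v_sum_le {ι : Type*} (s : Finset ι) (f : ι → L) (m : WithTop ℝ)
    (h : ∀ i ∈ s, m ≤ v (f i)) : m ≤ v (∑ i ∈ s, f i) := by
  classical
  induction s using Finset.induction_on with
  | empty => simpa [v_zero v hv0] using le_top
  | insert _ _ hx ih =>
    rename_i a s
    rw [Finset.sum_insert hx]
    refine le_trans ?_ (hvadd _ _)
    exact le_min (h a (Finset.mem_insert_self a s))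
      (ih fun i hi => h i (Finset.mem_insert_of_mem hi))

include hv0 hvadd in
lemma v_sum_lt {ι : Type*} (s : Finset ι) (f : ι → L) (w : WithTop ℝ) (hw : w < ⊤)
    (h : ∀ i ∈ s, w < v (f i)) : w < v (∑ i ∈ s, f i) := by
  classical
  induction s using Finset.induction_on with
  | empty => simpa [v_zero v hv0] using hw
  | insert _ _ hx ih =>
    rename_i a s
    rw [Finset.sum_insert hx]
    refine lt_of_lt_of_le ?_ (hvadd _ _)
    exact lt_min (h a (Finset.mem_insert_self a s))
      (ih fun i hi => h i (Finset.mem_insert_of_mem hi))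

include hvmul hvadd hvint in
lemma v_add_eq (x y : L) (h : v x < v y) : v (x + y) = v x := by
  refine le_antisymm ?_ ?_
  · by_contra hc
    push_neg at hc
    have h1 : (x + y) + (-y) = x := by ring
    have h2 := hvadd (x + y) (-y)
    rw [h1, v_neg v hvmul hvint] at h2
    exact absurd h2 (not_le.mpr (lt_min hc h))
  · calc v x = min (v x) (v y) := (min_eq_left h.le).symm
      _ ≤ v (x + y) := hvadd x y

include hv0 hvmul hvadd hvint in
lemma v_sub_pos {x y : L} (hx : 0 < v x) (hy : 0 < v y) : 0 < v (x - y) := by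
  rw [sub_eq_add_neg]
  refine lt_of_lt_of_le ?_ (hvadd _ _)
  rw [v_neg v hvmul hvint]
  exact lt_min hx hy

include hv0 hvmul hvint in
lemma v_rat_nonneg [CharZero L] (q : ℚ) : (0 : WithTop ℝ) ≤ v ((q : L)) := by
  rcases eq_or_ne q 0 with rfl | hq
  · rw [Rat.cast_zero, v_zero v hv0]; exact le_top
  · have hden : ((q.den : L)) ≠ 0 := Nat.cast_ne_zero.mpr q.den_nz
    have key : (q : L) * ((q.den : L)) = ((q.num : L)) := by
      rw [Rat.cast_def]
      field_simp
    have h1 : v ((q.num : L)) = 0 := hvint q.num (Rat.num_ne_zero.mpr hq)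
    have h2 : v ((q.den : L)) = 0 := by
      have := hvint (q.den : ℤ) (by exact_mod_cast q.den_nz)
      simpa using this
    have := hvmul (q : L) ((q.den : L))
    rw [key, h1, h2, add_zero] at this
    rw [this]

include hv0 hvint in
lemma charZero_of_v : CharZero L := by
  refine ⟨fun a b hab => ?_⟩
  by_contra hne
  have h1 : ((a : ℤ) - (b : ℤ)) ≠ 0 := sub_ne_zero.mpr (by exact_mod_cast hne)
  have h2 := hvint _ h1
  have h3 : ((((a : ℤ) - (b : ℤ)) : ℤ) : L) = 0 := by push_cast; rw [hab]; ring
  rw [h3, (hv0 0).2 rfl] at h2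
  exact (by simp : (⊤ : WithTop ℝ) ≠ 0) h2

end VBasic

/-! ### Binomial interpolation over ℚ -/

lemma binom_combo (k : ℕ) : ∀ P : Polynomial ℚ, P.degree < (k : ℕ) →
    ∃ q : ℕ → ℚ, ∀ x : ℕ, P.eval (x : ℚ) = ∑ j ∈ Finset.range k, q j * (x.choose j : ℚ) := by
  induction k with
  | zero =>
    intro P hP
    have hP0 : P = 0 := by
      ext m
      simpa using (Polynomial.degree_lt_iff_coeff_zero P 0).mp hP m (Nat.zero_le m)
    exact ⟨0, fun x => by simp [hP0]⟩
  | succ k ih =>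
    intro P hP
    set c := P.coeff k with hc
    set B : Polynomial ℚ := Polynomial.C c * descPochhammer ℚ k with hBdef
    have hdP : (descPochhammer ℚ k).degree = (k : WithBot ℕ) := by
      rw [Polynomial.degree_eq_natDegree (monic_descPochhammer ℚ k).ne_zero,
        descPochhammer_natDegree]
    have hBdeg : B.degree ≤ (k : WithBot ℕ) := by
      calc B.degree ≤ (Polynomial.C c).degree + (descPochhammer ℚ k).degree :=
            Polynomial.degree_mul_le _ _
        _ ≤ 0 + (k : WithBot ℕ) := add_le_add Polynomial.degree_C_le (le_of_eq hdP)
        _ = (k : WithBot ℕ) := zero_add _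
    have hBk : B.coeff k = c := by
      have hmc := (monic_descPochhammer ℚ k).coeff_natDegree
      rw [descPochhammer_natDegree] at hmc
      rw [hBdef, Polynomial.coeff_C_mul, hmc, mul_one]
    have hP' : (P - B).degree < (k : WithBot ℕ) := by
      rw [Polynomial.degree_lt_iff_coeff_zero]
      intro mm hmm
      rcases eq_or_lt_of_le hmm with rfl | hlt
      · rw [Polynomial.coeff_sub, hBk, ← hc, sub_self]
      · rw [Polynomial.coeff_sub,
          (Polynomial.degree_lt_iff_coeff_zero P (k+1)).mp hP mm (by omega),
          Polynomial.coeff_eq_zero_of_degree_lt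
            (lt_of_le_of_lt hBdeg (by exact_mod_cast hlt)), sub_self]
    obtain ⟨q, hq⟩ := ih (P - B) hP'
    refine ⟨fun j => if j = k then c * (k.factorial : ℚ) else q j, fun x => ?_⟩
    have hBeval : B.eval (x : ℚ) = c * (k.factorial : ℚ) * (x.choose k : ℚ) := by
      rw [hBdef, Polynomial.eval_mul, Polynomial.eval_C,
        descPochhammer_eval_eq_descFactorial ℚ x k]
      have : (x.descFactorial k : ℚ) = (k.factorial : ℚ) * (x.choose k : ℚ) := by
        rw [Nat.descFactorial_eq_factorial_mul_choose]; push_cast; ring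
      rw [this, mul_assoc]
    have hPx : P.eval (x : ℚ) = (P - B).eval (x : ℚ) + B.eval (x : ℚ) := by
      rw [Polynomial.eval_sub]; ring
    rw [hPx, hq x, hBeval]
    simp only [Finset.sum_range_succ, reduceIte]
    congr 1
    exact Finset.sum_congr rfl fun j hj => by
      rw [if_neg (Finset.mem_range.mp hj).ne]

lemma choose_combo (S : Finset ℕ) (n : ℕ) : ∃ q : ℕ → ℚ, ∀ e ∈ S,
    (e.choose n : ℚ) = ∑ j ∈ Finset.range S.card, q j * (e.choose j : ℚ) := by
  classical
  have hinj : Set.InjOn (Nat.cast : ℕ → ℚ) S := fun a _ b _ h => Nat.cast_injective h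
  obtain ⟨q, hq⟩ := binom_combo S.card
    (Lagrange.interpolate S Nat.cast (fun e => (e.choose n : ℚ)))
    (Lagrange.degree_interpolate_lt _ hinj)
  refine ⟨q, fun e he => ?_⟩
  rw [← Lagrange.eval_interpolate_at_node (fun e => (e.choose n : ℚ)) hinj he]
  exact hq e

/-! ### Coefficients of products of `X - C y` with `v y > 0` -/

section Prod

variable (hv0 : ∀ x, v x = ⊤ ↔ x = 0)
  (hvmul : ∀ x y, v (x * y) = v x + v y)
  (hvadd : ∀ x y, min (v x) (v y) ≤ v (x + y))
  (hvint : ∀ n : ℤ, n ≠ 0 → v ((n : ℤ) : L) = 0)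

include hv0 hvmul hvadd hvint in
lemma prod_coeff_props :
    ∀ (m : Multiset L), (∀ y ∈ m, 0 < v y) →
      (∀ j, j < Multiset.card m →
        0 < v (((m.map fun y => Polynomial.X - Polynomial.C y).prod).coeff j)) ∧
      ((m.map fun y => Polynomial.X - Polynomial.C y).prod).coeff (Multiset.card m) = 1 ∧
      (∀ j, Multiset.card m < j →
        ((m.map fun y => Polynomial.X - Polynomial.C y).prod).coeff j = 0) := by
  intro m
  induction m using Multiset.induction_on with
  | empty =>
    intro _
    refine ⟨fun j hj => by simp at hj, by simp, fun j hj => ?_⟩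
    simp only [Multiset.map_zero, Multiset.prod_zero, Polynomial.coeff_one]
    rw [if_neg]
    simp at hj
    omega
  | cons a s ih =>
    intro hmem
    obtain ⟨ih1, ih2, ih3⟩ := ih (fun y hy => hmem y (Multiset.mem_cons_of_mem hy))
    have ha : 0 < v a := hmem a (Multiset.mem_cons_self a s)
    set h' := (s.map fun y => Polynomial.X - Polynomial.C y).prod with hh'
    have hnn : ∀ i, (0 : WithTop ℝ) ≤ v (h'.coeff i) := by
      intro i
      rcases lt_trichotomy i (Multiset.card s) with h | h | h
      · exact (ih1 i h).le
      · rw [h, ih2, v_one v hvint]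
      · rw [ih3 i h, v_zero v hv0]; exact le_top
    have hform : ∀ j, (((a ::ₘ s).map fun y => Polynomial.X - Polynomial.C y).prod).coeff j
        = (if j = 0 then 0 else h'.coeff (j - 1)) - a * h'.coeff j := by
      intro j
      rw [Multiset.map_cons, Multiset.prod_cons, sub_mul, Polynomial.coeff_sub,
        Polynomial.coeff_C_mul]
      congr 1
      cases j with
      | zero => simp [Polynomial.mul_coeff_zero]
      | succ jj => simp [Polynomial.coeff_X_mul, hh']
    rw [Multiset.card_cons]
    have hpart2 : ∀ j, 0 < v (a * h'.coeff j) := by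
      intro j; rw [hvmul]; exact pos_add_nonneg ha (hnn j)
    refine ⟨fun j hj => ?_, ?_, fun j hj => ?_⟩
    · rw [hform j]
      by_cases hj0 : j = 0
      · subst hj0
        rw [if_pos rfl, zero_sub, v_neg v hvmul hvint]
        exact hpart2 0
      · rw [if_neg hj0]
        exact v_sub_pos v hv0 hvmul hvadd hvint (ih1 (j - 1) (by omega)) (hpart2 j)
    · rw [hform]
      rw [if_neg (by omega : ¬(Multiset.card s + 1 = 0))]
      have e1 : Multiset.card s + 1 - 1 = Multiset.card s := by omega
      rw [e1, ih2, ih3 (Multiset.card s + 1) (by omega), mul_zero, sub_zero]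
    · rw [hform j, if_neg (by omega : ¬(j = 0)), ih3 (j - 1) (by omega), ih3 j (by omega),
        mul_zero, sub_zero]

include hv0 hvmul hvadd hvint in
lemma card_le_of_dvd (g : Polynomial L) (hg : g ≠ 0) (j0 : ℕ)
    (hj0 : ∀ n, v (g.coeff j0) ≤ v (g.coeff n))
    (m : Multiset L) (hm : ∀ y ∈ m, 0 < v y)
    (hdvd : (m.map fun y => Polynomial.X - Polynomial.C y).prod ∣ g) :
    Multiset.card m ≤ j0 := by
  classical
  obtain ⟨u, hu⟩ := hdvd
  have hu0 : u ≠ 0 := fun h => hg (by rw [hu, h, mul_zero])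
  obtain ⟨i0, hi0mem, hi0min⟩ := Finset.exists_min_image u.support
    (fun i => v (u.coeff i)) (Polynomial.nonempty_support_iff.mpr hu0)
  set w := v (u.coeff i0) with hwdef
  have hwtop : w ≠ ⊤ := fun h => (Polynomial.mem_support_iff.mp hi0mem) ((hv0 _).mp h)
  have hwle : ∀ i, w ≤ v (u.coeff i) := by
    intro i
    by_cases hi : i ∈ u.support
    · exact hi0min i hi
    · rw [Polynomial.notMem_support_iff.mp hi, v_zero v hv0]; exact le_top
  set N := Multiset.card m with hN
  obtain ⟨hH1, hH2, hH3⟩ := prod_coeff_props v hv0 hvmul hvadd hvint m hm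
  have claim2 : ∀ jj, jj < N → w < v (g.coeff jj) := by
    intro jj hjj
    rw [hu, Polynomial.coeff_mul]
    refine v_sum_lt v hv0 hvadd _ _ w (lt_top_iff_ne_top.mpr hwtop) ?_
    intro x hx
    have hx1 : x.1 + x.2 = jj := Finset.HasAntidiagonal.mem_antidiagonal.mp hx
    rw [hvmul]
    exact aux_lt_add hwtop (hH1 x.1 (by omega)) (hwle x.2)
  have claim1 : v (g.coeff (N + i0)) = w := by
    rw [hu, Polynomial.coeff_mul]
    have hmem : ((N, i0) : ℕ × ℕ) ∈ Finset.HasAntidiagonal.antidiagonal (N + i0) :=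
      Finset.HasAntidiagonal.mem_antidiagonal.mpr rfl
    rw [← Finset.sum_erase_add _ _ hmem, hH2, one_mul]
    have hrest : w < v (∑ x ∈ (Finset.HasAntidiagonal.antidiagonal (N + i0)).erase (N, i0),
        ((m.map fun y => Polynomial.X - Polynomial.C y).prod).coeff x.1 * u.coeff x.2) := by
      refine v_sum_lt v hv0 hvadd _ _ w (lt_top_iff_ne_top.mpr hwtop) ?_
      intro x hx
      obtain ⟨hxne, hxmem⟩ := Finset.mem_erase.mp hx
      have hx1 : x.1 + x.2 = N + i0 := Finset.HasAntidiagonal.mem_antidiagonal.mp hxmem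
      rcases lt_trichotomy x.1 N with h | h | h
      · rw [hvmul]
        exact aux_lt_add hwtop (hH1 x.1 h) (hwle x.2)
      · exfalso
        apply hxne
        have h2 : x.2 = i0 := by omega
        exact Prod.ext h h2
      · rw [hH3 x.1 h, zero_mul, v_zero v hv0]
        exact lt_top_iff_ne_top.mpr hwtop
    rw [add_comm]
    exact v_add_eq v hvmul hvadd hvint _ _ hrest
  by_contra hcon
  push_neg at hcon
  exact absurd (claim1 ▸ hj0 (N + i0)) (not_le.mpr (claim2 j0 hcon))

end Prod

end RootsAux

theorem roots_one_add_maximalIdeal_le (L : Type*) [Field L] (v : L → WithTop ℝ)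
    (hv0 : ∀ x, v x = ⊤ ↔ x = 0)
    (hvmul : ∀ x y, v (x * y) = v x + v y)
    (hvadd : ∀ x y, min (v x) (v y) ≤ v (x + y))
    (hvint : ∀ n : ℤ, n ≠ 0 → v ((n : ℤ) : L) = 0)
    (t : ℕ) (ht : 1 ≤ t) :
    (∀ f : Polynomial L, f ≠ 0 → f.support.card ≤ t + 1 →
      (f.roots.filter (fun r => 0 < v (r - 1))).card ≤ t) ∧
    (∀ f : Polynomial L, f ≠ 0 → f.support.card ≤ t + 1 →
      (f.roots.toFinset.filter (fun r => 0 < v (r - 1))).card ≤ t) := by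
  classical
  haveI : CharZero L := RootsAux.charZero_of_v v hv0 hvint
  have key : ∀ f : Polynomial L, f ≠ 0 → f.support.card ≤ t + 1 →
      (f.roots.filter (fun r => 0 < v (r - 1))).card ≤ t := by
    intro f hf hcard
    set g := f.comp (Polynomial.X + Polynomial.C 1) with hgdef
    have hcompX : (Polynomial.X + Polynomial.C (1:L)).comp
        (Polynomial.X + Polynomial.C (-1:L)) = Polynomial.X := by
      rw [Polynomial.add_comp, Polynomial.X_comp, Polynomial.C_comp]
      rw [add_assoc, ← Polynomial.C_add]
      norm_num
    have hg0 : g ≠ 0 := by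
      intro h
      apply hf
      have h2 : g.comp (Polynomial.X + Polynomial.C (-1)) = f := by
        rw [hgdef, Polynomial.comp_assoc, hcompX, Polynomial.comp_X]
      rw [h, Polynomial.zero_comp] at h2
      exact h2.symm
    have hcoeff : ∀ n, g.coeff n = ∑ e ∈ f.support, f.coeff e * ((e.choose n : ℕ) : L) := by
      intro n
      rw [hgdef, Polynomial.comp_eq_sum_left, Polynomial.sum_def, Polynomial.finset_sum_coeff]
      refine Finset.sum_congr rfl fun e he => ?_
      rw [Polynomial.coeff_C_mul, Polynomial.C_1, Polynomial.coeff_X_add_one_pow]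
    set k := f.support.card with hk
    have hkpos : 0 < k := Finset.card_pos.mpr (Polynomial.support_nonempty.mpr hf)
    obtain ⟨j0, hj0mem, hj0min⟩ := Finset.exists_min_image (Finset.range k)
      (fun j => v (g.coeff j)) ⟨0, Finset.mem_range.mpr hkpos⟩
    have hmin : ∀ n, v (g.coeff j0) ≤ v (g.coeff n) := by
      intro n
      obtain ⟨q, hq⟩ := RootsAux.choose_combo f.support n
      have hrep : g.coeff n = ∑ j ∈ Finset.range k, ((q j : ℚ) : L) * g.coeff j := by
        rw [hcoeff n]
        have hterm : ∀ e ∈ f.support, f.coeff e * ((e.choose n : ℕ) : L)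
            = ∑ j ∈ Finset.range k, ((q j : ℚ) : L) * (f.coeff e * ((e.choose j : ℕ) : L)) := by
          intro e he
          have hcast : ((e.choose n : ℕ) : L)
              = ∑ j ∈ Finset.range k, ((q j : ℚ) : L) * ((e.choose j : ℕ) : L) := by
            have h1 := hq e he
            calc ((e.choose n : ℕ) : L) = (((e.choose n : ℕ) : ℚ) : L) := by push_cast; ring
              _ = ((∑ j ∈ Finset.range k, q j * ((e.choose j : ℕ) : ℚ) : ℚ) : L) := by
                  rw [← h1]
              _ = ∑ j ∈ Finset.range k, ((q j : ℚ) : L) * ((e.choose j : ℕ) : L) := by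
                  push_cast; ring
          rw [hcast, Finset.mul_sum]
          exact Finset.sum_congr rfl fun j _ => by ring
        rw [Finset.sum_congr rfl hterm, Finset.sum_comm]
        refine Finset.sum_congr rfl fun j _ => ?_
        rw [hcoeff j, Finset.mul_sum]
      rw [hrep]
      refine RootsAux.v_sum_le v hv0 hvadd _ _ _ ?_
      intro j hj
      calc v (g.coeff j0) = 0 + v (g.coeff j0) := (zero_add _).symm
        _ ≤ v ((q j : L)) + v (g.coeff j) :=
            add_le_add (RootsAux.v_rat_nonneg v hv0 hvmul hvint (q j)) (hj0min j hj)
        _ = v ((q j : L) * g.coeff j) := (hvmul _ _).symm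
    set Cs := f.roots.filter (fun r => 0 < v (r - 1)) with hCs
    set ms := Cs.map (fun r => r - 1) with hms
    have hm : ∀ y ∈ ms, 0 < v y := by
      intro y hy
      obtain ⟨r, hr, rfl⟩ := Multiset.mem_map.mp hy
      exact (Multiset.mem_filter.mp hr).2
    have hdvd : (ms.map fun y => Polynomial.X - Polynomial.C y).prod ∣ g := by
      have h1 : (Cs.map fun r => Polynomial.X - Polynomial.C r).prod ∣ f :=
        dvd_trans (Multiset.prod_dvd_prod_of_le (Multiset.map_le_map (Multiset.filter_le _ _)))
          (Polynomial.prod_multiset_X_sub_C_dvd f)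
      obtain ⟨u, hu⟩ := h1
      refine ⟨u.comp (Polynomial.X + Polynomial.C 1), ?_⟩
      rw [hgdef, hu, Polynomial.mul_comp, Polynomial.multiset_prod_comp]
      congr 1
      rw [hms, Multiset.map_map, Multiset.map_map]
      refine congrArg Multiset.prod (Multiset.map_congr rfl fun r hr => ?_)
      show (Polynomial.X - Polynomial.C r).comp (Polynomial.X + Polynomial.C 1)
        = Polynomial.X - Polynomial.C (r - 1)
      rw [Polynomial.sub_comp, Polynomial.X_comp, Polynomial.C_comp, map_sub]
      ring
    have hcardle := RootsAux.card_le_of_dvd v hv0 hvmul hvadd hvint g hg0 j0 hmin ms hm hdvd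
    have hj0t : j0 ≤ t := by
      have := Finset.mem_range.mp hj0mem
      omega
    calc Multiset.card Cs = Multiset.card ms := (Multiset.card_map _ _).symm
      _ ≤ j0 := hcardle
      _ ≤ t := hj0t
  refine ⟨key, fun f hf hc => ?_⟩
  calc (f.roots.toFinset.filter (fun r => 0 < v (r - 1))).card
      = ((f.roots.filter (fun r => 0 < v (r - 1))).toFinset).card := by
        rw [Multiset.toFinset_filter]
    _ ≤ Multiset.card (f.roots.filter (fun r => 0 < v (r - 1))) :=
        Multiset.toFinset_card_le _
    _ ≤ t := key f hf hc
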